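/- Let a, b, c be coprime positive integers with min{a,b,c} > 1, b ≥ 3, c ≥ 16, and gcd(b,c) = 1. If (x,y,z) is a positive integer solution of a^x + b^y = c^z with a^(2x) < c^z, then gcd(y,z) = 1, and 0 < log c / log b − y/z < 2/(z · c^(z/2) · log b); in particular y/z is a convergent of the simple continued fraction expansion of log c / log b. -/

import Mathlib

set_option maxHeartbeats 1000000

lemma aux_four_mul_le (z : ℕ) : 4 * z ≤ 4 ^ z := by
  induction z with
  | zero => simp
  | succ k ih =>
    have h1 : k < 4 ^ k := Nat.lt_pow_self (by norm_num)
    have h2 : 4 ^ (k+1) = 4 * 4 ^ k := by ring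
    omega

lemma aux_real (b c y z : ℕ) (hb : 3 ≤ b) (hc : 16 ≤ c)
    (hy : 0 < y) (hz : 0 < z) (hbyc : b ^ y < c ^ z)
    (hgcd : Nat.gcd y z = 1)
    (A : ℝ) (hA0 : 0 < A)
    (hAeq : A + (b:ℝ) ^ y = (c:ℝ) ^ z)
    (hA2 : A ^ 2 < (c:ℝ) ^ z) :
    0 < Real.log c / Real.log b - (y : ℝ) / z ∧
    Real.log c / Real.log b - (y : ℝ) / z <
      2 / (z * (c : ℝ) ^ ((z : ℝ) / 2) * Real.log b) ∧
    ∃ n : ℕ, (GenContFract.of (Real.log c / Real.log b)).convs n = (y : ℝ) / z := by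
  have hb1 : (1:ℝ) < b := by exact_mod_cast by omega
  have hc1 : (1:ℝ) < c := by exact_mod_cast by omega
  have hc0 : (0:ℝ) < c := by linarith
  have hB : 0 < Real.log b := Real.log_pos hb1
  have hC : 0 < Real.log c := Real.log_pos hc1
  have hz0 : (0:ℝ) < z := by exact_mod_cast hz
  have hby0 : (0:ℝ) < (b:ℝ) ^ y := by positivity
  have hcz0 : (0:ℝ) < (c:ℝ) ^ z := by positivity
  have hbyc' : (b:ℝ) ^ y < (c:ℝ) ^ z := by exact_mod_cast hbyc
  set s : ℝ := (c : ℝ) ^ ((z : ℝ) / 2) with hs_def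
  have hs0 : 0 < s := Real.rpow_pos_of_pos hc0 _
  have hs2 : s ^ 2 = (c:ℝ) ^ z := by
    rw [hs_def, ← Real.rpow_natCast ((c:ℝ) ^ ((z:ℝ)/2)) 2, ← Real.rpow_mul hc0.le,
      show (z:ℝ)/2 * ((2:ℕ):ℝ) = ((z:ℕ):ℝ) by push_cast; ring, Real.rpow_natCast]
  have hs4 : (4:ℝ) ^ (z:ℕ) ≤ s := by
    have h1 : (16:ℝ) ^ ((z:ℝ)/2) ≤ s := by
      apply Real.rpow_le_rpow (by norm_num) (by exact_mod_cast hc) (by positivity)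
    have h2 : (16:ℝ) ^ ((z:ℝ)/2) = (4:ℝ) ^ (z:ℕ) := by
      have : (16:ℝ) = (4:ℝ) ^ (2:ℝ) := by
        rw [show (2:ℝ) = ((2:ℕ):ℝ) by norm_num, Real.rpow_natCast]; norm_num
      rw [this, ← Real.rpow_mul (by norm_num : (0:ℝ) ≤ 4)]
      rw [show (2:ℝ) * ((z:ℝ)/2) = (z:ℝ) by ring, Real.rpow_natCast]
    linarith
  have hs4' : (4:ℝ) ≤ s := by
    have h1 : (4:ℝ) ^ 1 ≤ (4:ℝ) ^ (z:ℕ) := pow_le_pow_right₀ (by norm_num) hz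
    simpa using h1.trans hs4
  have hAs : A < s := by
    have : A ^ 2 < s ^ 2 := by rw [hs2]; exact hA2
    nlinarith
  have hyBzC : (y:ℝ) * Real.log b < (z:ℝ) * Real.log c := by
    have := Real.log_lt_log hby0 hbyc'
    rwa [Real.log_pow, Real.log_pow] at this
  have hpos : 0 < Real.log c / Real.log b - (y : ℝ) / z := by
    rw [sub_pos, div_lt_div_iff₀ hz0 hB]
    linarith
  have hD : (z:ℝ) * Real.log c - y * Real.log b < A / (b:ℝ) ^ y := by
    have hratio1 : (1:ℝ) < (c:ℝ) ^ z / (b:ℝ) ^ y := (one_lt_div hby0).2 hbyc'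
    have h1 : Real.log ((c:ℝ) ^ z / (b:ℝ) ^ y) < (c:ℝ) ^ z / (b:ℝ) ^ y - 1 :=
      Real.log_lt_sub_one_of_pos (by positivity) (by linarith)
    rw [Real.log_div (by positivity) (by positivity), Real.log_pow, Real.log_pow] at h1
    have h2 : (c:ℝ) ^ z / (b:ℝ) ^ y - 1 = A / (b:ℝ) ^ y := by
      field_simp; linarith
    linarith [h1, h2]
  have hD2 : A / (b:ℝ) ^ y ≤ 2 / s := by
    rw [div_le_div_iff₀ hby0 hs0]
    have hbys : (b:ℝ) ^ y = s ^ 2 - A := by rw [hs2]; linarith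
    rw [hbys]
    nlinarith
  have hD3 : (z:ℝ) * Real.log c - y * Real.log b < 2 / s := lt_of_lt_of_le hD hD2
  have hsub : Real.log c / Real.log b - (y : ℝ) / z
      = ((z:ℝ) * Real.log c - y * Real.log b) / (z * Real.log b) := by
    field_simp
  have hmain : Real.log c / Real.log b - (y : ℝ) / z < 2 / (z * s * Real.log b) := by
    rw [hsub, div_lt_div_iff₀ (by positivity) (by positivity)]
    have h := mul_lt_mul_of_pos_right hD3 (show (0:ℝ) < z * s * Real.log b by positivity)
    have heq2 : 2 / s * (z * s * Real.log b) = 2 * (z * Real.log b) := by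
      field_simp
    linarith [h, heq2]
  refine ⟨hpos, hmain, ?_⟩
  -- Legendre
  have hzne : z ≠ 0 := hz.ne'
  set q : ℚ := Rat.mk' (y : ℤ) z hzne (by simpa [Int.natAbs_natCast] using hgcd) with hq_def
  have hq_cast : (q : ℝ) = (y : ℝ) / z := by
    rw [hq_def, Rat.cast_mk']
    push_cast
    ring
  have hq_den : (q.den : ℝ) = (z : ℝ) := by rw [hq_def]
  have hB1 : 1 < Real.log b := by
    rw [show (1:ℝ) = Real.log (Real.exp 1) by rw [Real.log_exp]]
    apply Real.log_lt_log (Real.exp_pos 1)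
    have := Real.exp_one_lt_d9
    have hb3 : (3:ℝ) ≤ b := by exact_mod_cast hb
    linarith
  have h4z : (4:ℝ) * z ≤ (4:ℝ) ^ (z:ℕ) := by
    exact_mod_cast aux_four_mul_le z
  have hlt2 : 2 / (z * s * Real.log b) < 1 / (2 * (z:ℝ) ^ 2) := by
    rw [div_lt_div_iff₀ (by positivity) (by positivity)]
    have h1 : (4:ℝ) * z < s * Real.log b := by
      have : (4:ℝ) * z ≤ s := h4z.trans hs4
      nlinarith
    nlinarith
  have habs : |Real.log c / Real.log b - (q:ℝ)| < 1 / (2 * (q.den : ℝ) ^ 2) := by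
    rw [hq_cast, hq_den, abs_of_pos hpos]
    exact hmain.trans hlt2
  obtain ⟨n, hn⟩ := Real.exists_convs_eq_rat habs
  exact ⟨n, by rw [hn, hq_cast]⟩

lemma aux_gcd (a b c x y z : ℕ) (ha : 1 < a) (hc : 16 ≤ c)
    (hz : 0 < z) (heq : a ^ x + b ^ y = c ^ z) (hlt : a ^ (2 * x) < c ^ z) :
    Nat.gcd y z = 1 := by
  by_contra hd
  have hd0 : 0 < Nat.gcd y z := Nat.gcd_pos_of_pos_right y hz
  have hd2 : 2 ≤ Nat.gcd y z := by omega
  obtain ⟨e, hde⟩ : ∃ e, Nat.gcd y z = e + 2 := ⟨Nat.gcd y z - 2, by omega⟩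
  obtain ⟨m, hm⟩ := Nat.gcd_dvd_left y z
  obtain ⟨n, hn⟩ := Nat.gcd_dvd_right y z
  rw [hde] at hm hn
  set u := c ^ n with hu_def
  set v := b ^ m with hv_def
  have hu1 : 1 ≤ u := Nat.one_le_pow _ _ (by omega)
  have hcz : c ^ z = u ^ (e + 2) := by rw [hn, mul_comm, pow_mul]
  have hby : b ^ y = v ^ (e + 2) := by rw [hm, mul_comm, pow_mul]
  rw [hcz, hby] at heq
  have hax : 0 < a ^ x := Nat.pow_pos (by omega)
  have hvu : v < u := by
    have hpow : v ^ (e + 2) < u ^ (e + 2) := by omega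
    exact lt_of_pow_lt_pow_left₀ _ (Nat.zero_le u) hpow
  have h1 : v ≤ u - 1 := by omega
  have h2 : v ^ (e + 2) ≤ (u - 1) ^ (e + 2) := Nat.pow_le_pow_left h1 _
  have h3 : (u - 1) ^ (e + 2) + u ^ (e + 1) ≤ u ^ (e + 2) := by
    have ha1 : (u - 1) ^ (e + 2) = (u - 1) ^ (e + 1) * (u - 1) := pow_succ _ _
    have ha2 : (u - 1) ^ (e + 1) * (u - 1) ≤ u ^ (e + 1) * (u - 1) :=
      Nat.mul_le_mul_right _ (Nat.pow_le_pow_left (Nat.sub_le u 1) _)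
    have ha3 : u ^ (e + 2) = u ^ (e + 1) * (u - 1) + u ^ (e + 1) := by
      have : u ^ (e + 2) = u ^ (e + 1) * u := pow_succ _ _
      rw [this]
      have hu' : u = (u - 1) + 1 := by omega
      calc u ^ (e + 1) * u = u ^ (e + 1) * ((u - 1) + 1) := by rw [← hu']
        _ = u ^ (e + 1) * (u - 1) + u ^ (e + 1) := by ring
    omega
  have key : u ^ (e + 1) ≤ a ^ x := by omega
  have key2 : c ^ z ≤ a ^ (2 * x) := by
    have k1 : u ^ (e + 2) ≤ u ^ (2 * (e + 1)) := Nat.pow_le_pow_right hu1 (by omega)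
    have k2 : u ^ (2 * (e + 1)) = (u ^ (e + 1)) ^ 2 := by
      rw [mul_comm, pow_mul]
    have k3 : (u ^ (e + 1)) ^ 2 ≤ (a ^ x) ^ 2 := Nat.pow_le_pow_left key 2
    have k4 : (a ^ x) ^ 2 = a ^ (2 * x) := by rw [mul_comm, pow_mul]
    calc c ^ z = u ^ (e + 2) := hcz
      _ ≤ u ^ (2 * (e + 1)) := k1
      _ = (u ^ (e + 1)) ^ 2 := k2
      _ ≤ (a ^ x) ^ 2 := k3
      _ = a ^ (2 * x) := k4
  omega


theorem stmt_10 (a b c x y z : ℕ)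
    (ha : 1 < a) (hb : 3 ≤ b) (hc : 16 ≤ c)
    (hab : Nat.Coprime a b) (hbc : Nat.Coprime b c) (hac : Nat.Coprime a c)
    (hx : 0 < x) (hy : 0 < y) (hz : 0 < z)
    (heq : a ^ x + b ^ y = c ^ z) (hlt : a ^ (2 * x) < c ^ z) :
    Nat.gcd y z = 1 ∧
    0 < Real.log c / Real.log b - (y : ℝ) / z ∧
    Real.log c / Real.log b - (y : ℝ) / z <
      2 / (z * (c : ℝ) ^ ((z : ℝ) / 2) * Real.log b) ∧
    ∃ n : ℕ, (GenContFract.of (Real.log c / Real.log b)).convs n = (y : ℝ) / z := by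
  have hgcd : Nat.gcd y z = 1 := aux_gcd a b c x y z ha hc hz heq hlt
  have hax : 0 < a ^ x := Nat.pow_pos (by omega)
  have hbyc : b ^ y < c ^ z := by omega
  have hA0 : (0:ℝ) < (a:ℝ) ^ x := by positivity
  have hAeq : (a:ℝ) ^ x + (b:ℝ) ^ y = (c:ℝ) ^ z := by exact_mod_cast heq
  have hA2 : ((a:ℝ) ^ x) ^ 2 < (c:ℝ) ^ z := by
    rw [← pow_mul, mul_comm]
    exact_mod_cast hlt
  exact ⟨hgcd, aux_real b c y z hb hc hy hz hbyc hgcd _ hA0 hAeq hA2⟩
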